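/- Let Σ_W be a p×p symmetric positive definite matrix, M a p×L real matrix, and D_π an L×L diagonal matrix with strictly positive diagonal entries π_1,...,π_L. Define Σ = Σ_W + M D_π Mᵀ. Then Σ is positive definite, the matrix B := Σ⁻¹ M D_π and the matrix H := D_π − Bᵀ Σ B satisfy: H is invertible and Σ_W⁻¹ M = B H⁻¹. -/

import Mathlib

open Matrix

theorem stmt_0 {p L : ℕ} (Sw : Matrix (Fin p) (Fin p) ℝ) (M : Matrix (Fin p) (Fin L) ℝ)
    (π : Fin L → ℝ) (hπ : ∀ ℓ, 0 < π ℓ) (hSw : Sw.PosDef) :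
    let Dπ := Matrix.diagonal π
    let S := Sw + M * Dπ * Mᵀ
    let B := S⁻¹ * M * Dπ
    let H := Dπ - Bᵀ * S * B
    S.PosDef ∧ IsUnit H.det ∧ Sw⁻¹ * M = B * H⁻¹ := by
  intro Dπ S B H
  have hDeq : Dπ = Matrix.diagonal π := rfl
  have hSeq : S = Sw + M * Dπ * Mᵀ := rfl
  have hBeq : B = S⁻¹ * M * Dπ := rfl
  have hHeq : H = Dπ - Bᵀ * S * B := rfl
  have hDpsd : (M * Dπ * Mᵀ).PosSemidef := by
    have hD : Dπ.PosSemidef := by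
      rw [hDeq]
      exact Matrix.posSemidef_diagonal_iff.mpr (fun i => (hπ i).le)
    simpa using hD.mul_mul_conjTranspose_same M
  have hS : S.PosDef := by rw [hSeq]; exact hSw.add_posSemidef hDpsd
  have hDdet : IsUnit Dπ.det := by
    rw [hDeq, Matrix.det_diagonal]
    exact (Finset.prod_pos (fun i _ => hπ i)).ne'.isUnit
  have hDT : Dπᵀ = Dπ := by rw [hDeq]; exact Matrix.diagonal_transpose π
  clear_value H B S Dπ
  have hSdet : IsUnit S.det := hS.det_pos.ne'.isUnit
  have hSwdet : IsUnit Sw.det := hSw.det_pos.ne'.isUnit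
  have hSinv : S * S⁻¹ = 1 := mul_nonsing_inv _ hSdet
  have hinvS : S⁻¹ * S = 1 := nonsing_inv_mul _ hSdet
  have hSwinv : Sw * Sw⁻¹ = 1 := mul_nonsing_inv _ hSwdet
  have hinvSw : Sw⁻¹ * Sw = 1 := nonsing_inv_mul _ hSwdet
  have hSsym : Sᵀ = S := by
    have := hS.isHermitian.eq
    rwa [Matrix.conjTranspose_eq_transpose_of_trivial] at this
  have hSinvsym : (S⁻¹)ᵀ = S⁻¹ := by
    rw [Matrix.transpose_nonsing_inv, hSsym]
  have hBT : Bᵀ = Dπ * Mᵀ * S⁻¹ := by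
    rw [hBeq]
    simp [Matrix.transpose_mul, hDT, hSinvsym, Matrix.mul_assoc]
  have hH : H = Dπ - Dπ * Mᵀ * S⁻¹ * M * Dπ := by
    rw [hHeq, hBT, hBeq]
    have e : Dπ * Mᵀ * S⁻¹ * S * (S⁻¹ * M * Dπ) = Dπ * Mᵀ * S⁻¹ * M * Dπ := by
      rw [Matrix.mul_assoc (Dπ * Mᵀ) S⁻¹ S, hinvS, Matrix.mul_one]
      simp [Matrix.mul_assoc]
    rw [e]
  -- key identities
  have key : S⁻¹ * (M * Dπ * Mᵀ) * Sw⁻¹ = Sw⁻¹ - S⁻¹ := by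
    have h2 : S⁻¹ * (Sw + M * Dπ * Mᵀ) * Sw⁻¹ = Sw⁻¹ := by
      rw [← hSeq, hinvS, Matrix.one_mul]
    rw [Matrix.mul_add, Matrix.add_mul] at h2
    rw [Matrix.mul_assoc S⁻¹ Sw Sw⁻¹, hSwinv, Matrix.mul_one] at h2
    linear_combination (norm := noncomm_ring) h2
  have key' : Sw⁻¹ * (M * Dπ * Mᵀ) * S⁻¹ = Sw⁻¹ - S⁻¹ := by
    have h2 : Sw⁻¹ * (Sw + M * Dπ * Mᵀ) * S⁻¹ = Sw⁻¹ := by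
      rw [← hSeq, Matrix.mul_assoc, hSinv, Matrix.mul_one]
    rw [Matrix.mul_add, Matrix.add_mul] at h2
    rw [hinvSw, Matrix.one_mul] at h2
    linear_combination (norm := noncomm_ring) h2
  set K : Matrix (Fin L) (Fin L) ℝ := 1 + Mᵀ * Sw⁻¹ * M * Dπ with hK
  have hHK : H * K = Dπ := by
    have keyC : Dπ * Mᵀ * (S⁻¹ * (M * Dπ * Mᵀ) * Sw⁻¹) * (M * Dπ)
        = Dπ * Mᵀ * (Sw⁻¹ - S⁻¹) * (M * Dπ) := by rw [key]
    simp only [Matrix.mul_sub, Matrix.sub_mul, Matrix.mul_assoc] at keyC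
    rw [hH, hK]
    simp only [Matrix.sub_mul, Matrix.mul_add, Matrix.mul_one, Matrix.mul_assoc]
    rw [keyC]
    abel
  have hHdet : IsUnit H.det := by
    have : H.det * K.det = Dπ.det := by rw [← Matrix.det_mul, hHK]
    exact isUnit_of_mul_isUnit_left (this ▸ hDdet)
  have hHinv : H * H⁻¹ = 1 := mul_nonsing_inv _ hHdet
  refine ⟨hS, hHdet, ?_⟩
  have main : Sw⁻¹ * M * H = B := by
    have keyM : Sw⁻¹ * (M * Dπ * Mᵀ) * S⁻¹ * (M * Dπ) = (Sw⁻¹ - S⁻¹) * (M * Dπ) := by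
      rw [key']
    simp only [Matrix.mul_sub, Matrix.sub_mul, Matrix.mul_assoc] at keyM
    rw [hH, hBeq]
    simp only [Matrix.mul_sub, Matrix.sub_mul, Matrix.mul_assoc]
    rw [keyM]
    abel
  calc Sw⁻¹ * M = Sw⁻¹ * M * (H * H⁻¹) := by rw [hHinv, Matrix.mul_one]
    _ = (Sw⁻¹ * M * H) * H⁻¹ := by simp only [Matrix.mul_assoc]
    _ = B * H⁻¹ := by rw [main]
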